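/- Let I be an ideal of ℂ[x_1,...,x_n] containing h_{k}(X_n), h_{k+1}(X_n), ..., h_{k+p}(X_n) and e_{p+2}(X_n), e_{p+3}(X_n), ..., e_n(X_n), where k ≥ 1 and p ≥ 0. Then h_{k+p+a}(X_n) ∈ I for every integer a ≥ 1. -/

import Mathlib

open MvPolynomial


variable {R : Type*} [CommSemiring R]

lemma Multiset.esymm_cons (a : R) (s : Multiset R) (n : ℕ) :
    (a ::ₘ s).esymm (n + 1) = s.esymm (n + 1) + a * s.esymm n := by
  rw [Multiset.esymm, Multiset.powersetCard_cons, Multiset.map_add, Multiset.sum_add,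
    Multiset.map_map, Multiset.esymm, Multiset.esymm, ← Multiset.sum_map_mul_left]
  congr 1
  exact congrArg Multiset.sum (Multiset.map_congr rfl (fun t _ => by simp [Multiset.prod_cons]))

lemma univ_option_val (σ : Type*) [Fintype σ] [DecidableEq σ] :
    (Finset.univ : Finset (Option σ)).val = none ::ₘ (Finset.univ : Finset σ).val.map some := by
  classical
  rw [univ_option]
  rfl

lemma esymm_option (σ : Type*) [Fintype σ] [DecidableEq σ] (r : ℕ) :
    esymm (Option σ) R (r + 1) =
      rename some (esymm σ R (r + 1)) + X none * rename some (esymm σ R r) := by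
  have hr : ∀ m : ℕ, (rename (some : σ → Option σ)) (esymm σ R m)
      = ((Finset.univ : Finset σ).val.map (fun i => X (some i) : σ → MvPolynomial (Option σ) R)).esymm m := by
    intro m
    rw [Finset.esymm_map_val, esymm, map_sum]
    simp
  rw [esymm_eq_multiset_esymm, univ_option_val, Multiset.map_cons, Multiset.esymm_cons,
    Multiset.map_map, hr, hr]
  rfl

lemma hsymm_option (σ : Type*) [Fintype σ] [DecidableEq σ] (d : ℕ) :
    hsymm (Option σ) R (d + 1) =
      X none * hsymm (Option σ) R d + rename some (hsymm σ R (d + 1)) := by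
  have hren : rename (some : σ → Option σ) (hsymm σ R (d + 1))
      = ∑ s : Sym σ (d + 1),
          ((s.1.map (fun i => X (some i))) : Multiset (MvPolynomial (Option σ) R)).prod := by
    rw [hsymm, map_sum]
    refine Finset.sum_congr rfl fun s _ => ?_
    rw [← Multiset.prod_hom _ (rename (R := R) (some : σ → Option σ)), Multiset.map_map]
    simp [Function.comp_def]
  rw [hsymm, ← Equiv.sum_comp (symOptionSuccEquiv (α := σ) (n := d)).symm
    (fun s : Sym (Option σ) (d + 1) => (s.1.map X).prod), Fintype.sum_sum_type]
  congr 1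
  · rw [hsymm, Finset.mul_sum]
    refine Finset.sum_congr rfl fun s _ => ?_
    show ((SymOptionSuccEquiv.decode (Sum.inl s)).1.map X).prod = _
    rw [SymOptionSuccEquiv.decode_inl]
    simp [Sym.coe_cons]
  · rw [hren]
    refine Finset.sum_congr rfl fun s _ => ?_
    show ((SymOptionSuccEquiv.decode (Sum.inr s)).1.map X).prod = _
    rw [SymOptionSuccEquiv.decode_inr]
    simp [Sym.coe_map, Multiset.map_map, Function.comp_def]

lemma newton_core {A : Type*} [CommRing A] (y : A) (e E h' H : ℕ → A)
    (hE0 : E 0 = 1) (hh0 : h' 0 = 1) (hH0 : H 0 = 1) (he0 : e 0 = 1)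
    (heo : ∀ r, e (r + 1) = E (r + 1) + y * E r)
    (hHrec : ∀ d, H (d + 1) = y * H d + h' (d + 1))
    (IH : ∀ m, 1 ≤ m → ∑ r ∈ Finset.range (m + 1), (-1 : A) ^ r * E r * h' (m - r) = 0)
    (m : ℕ) (hm : 1 ≤ m) :
    ∑ r ∈ Finset.range (m + 1), (-1 : A) ^ r * e r * H (m - r) = 0 := by
  obtain ⟨M, rfl⟩ : ∃ M, m = M + 1 := ⟨m - 1, by omega⟩
  set U : A := ∑ r ∈ Finset.range (M + 1), (-1) ^ r * E r * H (M - r) with hU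
  have step1 : ∀ r ∈ Finset.range (M + 1),
      (-1 : A) ^ r * E r * H (M + 1 - r)
        = y * ((-1) ^ r * E r * H (M - r)) + (-1) ^ r * E r * h' (M + 1 - r) := by
    intro r hr
    rw [Finset.mem_range] at hr
    have h1 : M + 1 - r = (M - r) + 1 := by omega
    rw [h1, hHrec (M - r), ← h1]
    ring
  have hT : (∑ r ∈ Finset.range (M + 2), (-1 : A) ^ r * E r * H (M + 1 - r)) = y * U := by
    rw [Finset.sum_range_succ (f := fun r => (-1 : A) ^ r * E r * H (M + 1 - r)),
      Finset.sum_congr rfl step1, Finset.sum_add_distrib, ← Finset.mul_sum, ← hU]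
    have h2 : (∑ r ∈ Finset.range (M + 1), (-1 : A) ^ r * E r * h' (M + 1 - r))
        + (-1 : A) ^ (M + 1) * E (M + 1) * H (M + 1 - (M + 1)) = 0 := by
      have := IH (M + 1) (by omega)
      rw [Finset.sum_range_succ] at this
      simpa [hh0, hH0] using this
    linear_combination h2
  have step2 : ∀ i ∈ Finset.range (M + 1),
      (-1 : A) ^ (i + 1) * e (i + 1) * H (M + 1 - (i + 1))
        = (-1) ^ (i + 1) * E (i + 1) * H (M + 1 - (i + 1))
          - y * ((-1) ^ i * E i * H (M - i)) := by
    intro i hi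
    have h3 : M + 1 - (i + 1) = M - i := by omega
    rw [h3, heo]
    ring
  rw [Finset.sum_range_succ' (f := fun r => (-1 : A) ^ r * e r * H (M + 1 - r)),
    Finset.sum_congr rfl step2, Finset.sum_sub_distrib, ← Finset.mul_sum, ← hU]
  rw [Finset.sum_range_succ' (f := fun r => (-1 : A) ^ r * E r * H (M + 1 - r))] at hT
  simp only [pow_zero, he0, hE0, one_mul, Nat.sub_zero] at hT ⊢
  linear_combination hT

lemma hsymm_of_isEmpty (σ : Type*) [Fintype σ] [DecidableEq σ] [IsEmpty σ] (m : ℕ) (hm : 1 ≤ m) :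
    hsymm σ R m = 0 := by
  obtain ⟨M, rfl⟩ : ∃ M, m = M + 1 := ⟨m - 1, by omega⟩
  haveI : IsEmpty (Sym σ (M + 1)) := by
    constructor
    intro s
    have hc : Multiset.card s.1 = M + 1 := s.2
    have : s.1 ≠ 0 := by
      intro h
      rw [h] at hc
      simp at hc
    obtain ⟨x, -⟩ := Multiset.exists_mem_of_ne_zero this
    exact IsEmpty.false x
  rw [hsymm, Finset.univ_eq_empty, Finset.sum_empty]

lemma esymm_eq_zero_of_card_lt (σ : Type*) [Fintype σ] (r : ℕ) (h : Fintype.card σ < r) :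
    esymm σ R r = 0 := by
  rw [esymm, Finset.powersetCard_eq_empty.mpr (by simpa using h), Finset.sum_empty]

lemma newton_eh {R : Type} [CommRing R] (n : ℕ) (m : ℕ) (hm : 1 ≤ m) :
    ∑ r ∈ Finset.range (m + 1),
      (-1 : MvPolynomial (Fin n) R) ^ r * esymm (Fin n) R r * hsymm (Fin n) R (m - r) = 0 := by
  induction n generalizing m with
  | zero =>
    apply Finset.sum_eq_zero
    intro r hr
    match r with
    | 0 => simp [hsymm_of_isEmpty (Fin 0) m hm]
    | (r + 1) =>
      rw [esymm_eq_zero_of_card_lt _ (r + 1) (by simp)]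
      ring
  | succ n ih =>
    have hopt : ∑ r ∈ Finset.range (m + 1),
        (-1 : MvPolynomial (Option (Fin n)) R) ^ r * esymm (Option (Fin n)) R r *
          hsymm (Option (Fin n)) R (m - r) = 0 := by
      refine newton_core (X none) (esymm (Option (Fin n)) R)
        (fun r => rename some (esymm (Fin n) R r)) (fun d => rename some (hsymm (Fin n) R d))
        (hsymm (Option (Fin n)) R) (by simp) (by simp [hsymm_zero]) (hsymm_zero _ _) (by simp)
        (fun r => esymm_option (Fin n) r) (fun d => hsymm_option (Fin n) d) ?_ m hm
      intro m' hm'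
      have := congrArg (rename (some : Fin n → Option (Fin n))) (ih m' hm')
      simpa only [map_sum, map_mul, map_pow, map_neg, map_one, map_zero] using this
    have := congrArg (rename (finSuccEquiv n).symm) hopt
    simpa only [map_sum, map_mul, map_pow, map_neg, map_one, rename_esymm, rename_hsymm,
      map_zero] using this

/-- If an ideal `I` of `ℂ[x_1,...,x_n]` contains `h_k, h_{k+1}, ..., h_{k+p}` and
`e_{p+2}, e_{p+3}, ..., e_n`, with `k ≥ 1`, then `h_{k+p+a} ∈ I` for every `a ≥ 1`. -/
theorem stmt_3 (n k p : ℕ) (hk : 1 ≤ k)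
    (I : Ideal (MvPolynomial (Fin n) ℂ))
    (hh : ∀ j ≤ p, hsymm (Fin n) ℂ (k + j) ∈ I)
    (he : ∀ r, p + 2 ≤ r → r ≤ n → esymm (Fin n) ℂ r ∈ I) :
    ∀ a, 1 ≤ a → hsymm (Fin n) ℂ (k + p + a) ∈ I := by
  intro a
  induction a using Nat.strong_induction_on with
  | _ a iha =>
    intro ha
    have hm : 1 ≤ k + p + a := by omega
    have key := newton_eh (R := ℂ) n (k + p + a) hm
    rw [Finset.sum_range_succ'] at key
    simp only [pow_zero, esymm_zero, one_mul, mul_one, Nat.sub_zero] at key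
    have hrw : hsymm (Fin n) ℂ (k + p + a)
        = -∑ i ∈ Finset.range (k + p + a),
            (-1 : MvPolynomial (Fin n) ℂ) ^ (i + 1) * esymm (Fin n) ℂ (i + 1) *
              hsymm (Fin n) ℂ (k + p + a - (i + 1)) := by
      linear_combination key
    rw [hrw]
    apply neg_mem
    apply Ideal.sum_mem
    intro i hi
    rw [Finset.mem_range] at hi
    by_cases hip : p + 2 ≤ i + 1
    · by_cases hin : i + 1 ≤ n
      · exact I.mul_mem_right _ (I.mul_mem_left _ (he (i + 1) hip hin))
      · rw [esymm_eq_zero_of_card_lt (Fin n) (i + 1) (by simpa using by omega), mul_zero, zero_mul]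
        exact I.zero_mem
    · apply I.mul_mem_left
      by_cases hcase : k + p + a - (i + 1) ≤ k + p
      · have h4 : k + p + a - (i + 1) = k + (k + p + a - (i + 1) - k) := by omega
        rw [h4]
        exact hh _ (by omega)
      · have h4 : k + p + a - (i + 1) = k + p + (k + p + a - (i + 1) - (k + p)) := by omega
        rw [h4]
        exact iha _ (by omega) (by omega)
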